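/- Let v: V_S ∪ δS → ℝ satisfy the discrete Neumann condition on δS (v(y) equals the weighted average (1/∂d(y)) Σ_{z∈V_S} w(y,z)v(z) for all y ∈ δS) and let u = v|_{V_S}. Let λ ∈ ℝ. Then v satisfies the eigenvalue equation (L_{V*} v)(x) = λ d(x) v(x) for all x ∈ V_S if and only if u satisfies the generalized eigenproblem L_S^N u = λ T_S u. -/
import Mathlib


open Matrix

variable {S C : Type*} [Fintype S] [Fintype C] [DecidableEq S] [DecidableEq C]

/-- Degree of a vertex in the ambient graph `G` on vertex set `S ⊕ C`
(`S` = landmark set `V_S`, `C` = the rest of the vertices). -/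
noncomputable def deg (W : Matrix (S ⊕ C) (S ⊕ C) ℝ) (x : S ⊕ C) : ℝ := ∑ y, W x y

/-- `W_G[V_S, V_S]`. -/
noncomputable def Wss (W : Matrix (S ⊕ C) (S ⊕ C) ℝ) : Matrix S S ℝ :=
  fun i j => W (Sum.inl i) (Sum.inl j)

/-- The boundary operator `B = W_G[V_G \ V_S, V_S]`. -/
noncomputable def Bmat (W : Matrix (S ⊕ C) (S ⊕ C) ℝ) : Matrix C S ℝ :=
  fun c s => W (Sum.inr c) (Sum.inl s)

/-- Boundary degree `∂d(c) = Σ_{s ∈ V_S} w(c,s)`. -/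
noncomputable def bdeg (W : Matrix (S ⊕ C) (S ⊕ C) ℝ) (c : C) : ℝ := ∑ s, Bmat W c s

/-- `T_S = D_G[V_S, V_S]`. -/
noncomputable def TS (W : Matrix (S ⊕ C) (S ⊕ C) ℝ) : Matrix S S ℝ :=
  diagonal (fun s => deg W (Sum.inl s))

/-- `T_S⁻¹` (inverse of the positive diagonal matrix `T_S`). -/
noncomputable def TSinv (W : Matrix (S ⊕ C) (S ⊕ C) ℝ) : Matrix S S ℝ :=
  diagonal (fun s => (deg W (Sum.inl s))⁻¹)

/-- `(T_S^δ)⁻¹` (inverse of the boundary degree matrix). -/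
noncomputable def Tdinv (W : Matrix (S ⊕ C) (S ⊕ C) ℝ) : Matrix C C ℝ :=
  diagonal (fun c => (bdeg W c)⁻¹)

/-- The Neumann Laplacian `L_S^N = L_G[V_S,V_S] - Bᵀ (T_S^δ)⁻¹ B`,
where `L_G[V_S,V_S] = T_S - W_G[V_S,V_S]`. -/
noncomputable def LN (W : Matrix (S ⊕ C) (S ⊕ C) ℝ) : Matrix S S ℝ :=
  (TS W - Wss W) - (Bmat W)ᵀ * Tdinv W * Bmat W

/-- `R = I - T_S⁻¹ L_S^N`. -/
noncomputable def Rmat (W : Matrix (S ⊕ C) (S ⊕ C) ℝ) : Matrix S S ℝ :=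
  1 - TSinv W * LN W

/-- for `v` satisfying the discrete Neumann condition on `δS`
(modelled by `C`) and `u = v|_{V_S}`, the eigenvalue equation
`(L_{V*} v)(x) = λ d(x) v(x)` for all `x ∈ V_S` holds iff
`L_S^N u = λ T_S u`. -/
theorem stmt_4 (W : Matrix (S ⊕ C) (S ⊕ C) ℝ) (hsym : W.IsSymm)
    (hnn : ∀ x y, 0 ≤ W x y) (hbd : ∀ c, 0 < bdeg W c)
    (v : S ⊕ C → ℝ) (lam : ℝ)
    (hNeu : ∀ c, v (Sum.inr c) =
      (bdeg W c)⁻¹ * ∑ z, W (Sum.inr c) (Sum.inl z) * v (Sum.inl z)) :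
    (∀ x : S, ((diagonal (deg W) - W) *ᵥ v) (Sum.inl x) =
        lam * deg W (Sum.inl x) * v (Sum.inl x)) ↔
      LN W *ᵥ (fun s => v (Sum.inl s)) =
        lam • (TS W *ᵥ fun s => v (Sum.inl s)) := by
  have key : ∀ x : S, ((diagonal (deg W) - W) *ᵥ v) (Sum.inl x)
      = (LN W *ᵥ (fun s => v (Sum.inl s))) x := by
    intro x
    have hsym' : ∀ c, W (Sum.inl x) (Sum.inr c) = W (Sum.inr c) (Sum.inl x) := by
      intro c; rw [← hsym.apply]
    have hdouble : ∑ c, W (Sum.inr c) (Sum.inl x) *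
          ((bdeg W c)⁻¹ * ∑ z, W (Sum.inr c) (Sum.inl z) * v (Sum.inl z))
        = ∑ s, (∑ c, W (Sum.inr c) (Sum.inl x) * (bdeg W c)⁻¹ * W (Sum.inr c) (Sum.inl s))
            * v (Sum.inl s) := by
      simp only [Finset.mul_sum, Finset.sum_mul]
      rw [Finset.sum_comm]
      exact Finset.sum_congr rfl fun s _ => Finset.sum_congr rfl fun c _ => by ring
    simp only [LN, Matrix.sub_mulVec, Matrix.mulVec, dotProduct, Matrix.sub_apply,
      TS, Wss, Bmat, Tdinv, Matrix.mul_apply, Matrix.transpose_apply,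
      Matrix.diagonal_apply, Pi.sub_apply, Fintype.sum_sum_type, hNeu, hsym',
      Sum.inl.injEq, reduceCtorEq, if_false, mul_ite, mul_zero, ite_mul, zero_mul,
      Finset.sum_ite_eq', Finset.sum_ite_eq, Finset.mem_univ, if_true]
    simp only [sub_mul, zero_sub, neg_mul, Finset.sum_sub_distrib, Finset.sum_neg_distrib]
    rw [hdouble]
    ring
  constructor
  · intro h
    funext x
    rw [← key x, h x]
    simp [TS, Matrix.mulVec_diagonal, mul_assoc]
  · intro h x
    rw [key x, h]
    simp [TS, Matrix.mulVec_diagonal, mul_assoc]
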